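/- Let p ∈ (0, 1) and θ ∈ [0, ∞) be real numbers. Suppose f : 𝒜 → 𝒜 satisfies ‖2 μ f((a+b)/2) + 2 μ f((a−b)/2) − 2 f(μ a) + f(c c* c) − f(c) c* c − c (f(c))* c − c c* f(c)‖ ≤ θ(‖a‖^p + ‖b‖^p + ‖c‖^p) for all μ ∈ 𝕋 and all a, b, c ∈ 𝒜. Then there exists a unique J*-derivation D : 𝒜 → 𝒜 such that ‖f(a) − D(a)‖ ≤ (2^p θ/(2 − 2^p)) ‖a‖^p for all a ∈ 𝒜, where D is obtained from the fixed point alternative as D(a) = lim_{n→∞} 2^{−n} f(2^n a). -/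

import Mathlib

open ContinuousLinearMap Filter Topology

variable {H K : Type*} [NormedAddCommGroup H] [InnerProductSpace ℂ H] [CompleteSpace H]
  [NormedAddCommGroup K] [InnerProductSpace ℂ K] [CompleteSpace K]

/-- `𝒜` is closed under the `J*`-triple product `x ↦ x x* x`. -/
def JStarClosed (𝒜 : Submodule ℂ (H →L[ℂ] K)) : Prop :=
  ∀ x : H →L[ℂ] K, x ∈ 𝒜 → (x ∘L adjoint x) ∘L x ∈ 𝒜

/-- The triple product `c c* c` as an element of `𝒜`. -/
noncomputable def cube (𝒜 : Submodule ℂ (H →L[ℂ] K)) (hA : JStarClosed 𝒜) (c : 𝒜) : 𝒜 :=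
  ⟨((c : H →L[ℂ] K) ∘L adjoint (c : H →L[ℂ] K)) ∘L (c : H →L[ℂ] K), hA c c.2⟩

/-- `D : 𝒜 → 𝒜` is a `J*`-derivation: it is `ℂ`-linear and satisfies
`D(c c* c) = D(c) c* c + c (D(c))* c + c c* D(c)`. -/
noncomputable def IsJStarDerivation (𝒜 : Submodule ℂ (H →L[ℂ] K)) (hA : JStarClosed 𝒜)
    (D : 𝒜 → 𝒜) : Prop :=
  (∀ a b : 𝒜, D (a + b) = D a + D b) ∧
  (∀ (z : ℂ) (a : 𝒜), D (z • a) = z • D a) ∧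
  (∀ c : 𝒜, (D (cube 𝒜 hA c) : H →L[ℂ] K) =
      ((D c : H →L[ℂ] K) ∘L adjoint (c : H →L[ℂ] K)) ∘L (c : H →L[ℂ] K) +
      ((c : H →L[ℂ] K) ∘L adjoint (D c : H →L[ℂ] K)) ∘L (c : H →L[ℂ] K) +
      ((c : H →L[ℂ] K) ∘L adjoint (c : H →L[ℂ] K)) ∘L (D c : H →L[ℂ] K))

/-- The defect of the generalized Jensen functional equation combined with the
`J*`-derivation identity, for a map `f : 𝒜 → 𝒜`, parameter `r` and scalar `μ`. -/
noncomputable def jensenDefect (𝒜 : Submodule ℂ (H →L[ℂ] K)) (hA : JStarClosed 𝒜)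
    (r : ℝ) (f : 𝒜 → 𝒜) (μ : ℂ) (a b c : 𝒜) : H →L[ℂ] K :=
  ((r : ℂ) * μ) • (f ((r : ℂ)⁻¹ • (a + b)) : H →L[ℂ] K) +
  ((r : ℂ) * μ) • (f ((r : ℂ)⁻¹ • (a - b)) : H →L[ℂ] K) -
  (2 : ℂ) • (f (μ • a) : H →L[ℂ] K) +
  (f (cube 𝒜 hA c) : H →L[ℂ] K) -
  ((f c : H →L[ℂ] K) ∘L adjoint (c : H →L[ℂ] K)) ∘L (c : H →L[ℂ] K) -
  ((c : H →L[ℂ] K) ∘L adjoint (f c : H →L[ℂ] K)) ∘L (c : H →L[ℂ] K) -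
  ((c : H →L[ℂ] K) ∘L adjoint (c : H →L[ℂ] K)) ∘L (f c : H →L[ℂ] K)

/-- The Hyers iteration sequence. -/
noncomputable def hyersSeq (𝒜 : Submodule ℂ (H →L[ℂ] K)) (f : 𝒜 → 𝒜) (n : ℕ) (a : 𝒜) : 𝒜 :=
  ((2 : ℂ) ^ n)⁻¹ • f (((2 : ℂ) ^ n) • a)

theorem norm_two_pow_smul_rpow (𝒜 : Submodule ℂ (H →L[ℂ] K)) (n : ℕ) (a : 𝒜) (p : ℝ) :
    ‖(2:ℂ)^n • a‖ ^ p = ((2:ℝ)^p)^n * ‖a‖^p := by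
  rw [show ‖(2:ℂ)^n • a‖ = ‖(2:ℂ)^n‖ * ‖a‖ from norm_smul (β := H →L[ℂ] K) ((2:ℂ)^n) (a : H →L[ℂ] K)]
  have h2 : ‖(2:ℂ)^n‖ = (2:ℝ)^n := by simp
  rw [h2, Real.mul_rpow (y := ‖a‖) (by positivity) (norm_nonneg _), ← Real.rpow_natCast 2 n,
    ← Real.rpow_natCast ((2:ℝ)^p) n, ← Real.rpow_mul (by norm_num),
    ← Real.rpow_mul (by norm_num), mul_comm, mul_comm p (n:ℝ)]
  ring

set_option maxHeartbeats 4000000 in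
/-- Corollary 3.3 (Hyers–Ulam–Rassias stability of `J*`-derivations via the fixed point
alternative, `r = 2`): there is a unique `J*`-derivation `D` with
`‖f(a) − D(a)‖ ≤ 2^p θ/(2 − 2^p) ‖a‖^p`, given by `D(a) = lim 2⁻ⁿ f(2ⁿ a)`. -/
theorem HUR_stability_JStarDerivation_fixedPoint
    (𝒜 : Submodule ℂ (H →L[ℂ] K)) (hclosed : IsClosed (𝒜 : Set (H →L[ℂ] K)))
    (hA : JStarClosed 𝒜)
    (p θ : ℝ) (hp0 : 0 < p) (hp1 : p < 1) (hθ : 0 ≤ θ)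
    (f : 𝒜 → 𝒜)
    (hineq : ∀ (μ : ℂ), ‖μ‖ = 1 → ∀ a b c : 𝒜,
      ‖jensenDefect 𝒜 hA 2 f μ a b c‖ ≤ θ * (‖a‖ ^ p + ‖b‖ ^ p + ‖c‖ ^ p)) :
    ∃ D : 𝒜 → 𝒜,
      (IsJStarDerivation 𝒜 hA D ∧
        (∀ a : 𝒜, ‖f a - D a‖ ≤ 2 ^ p * θ / (2 - 2 ^ p) * ‖a‖ ^ p) ∧
        (∀ a : 𝒜, Tendsto (fun n : ℕ => ((2 : ℂ) ^ n)⁻¹ • f (((2 : ℂ) ^ n) • a))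
          atTop (nhds (D a)))) ∧
      (∀ D' : 𝒜 → 𝒜,
        (IsJStarDerivation 𝒜 hA D' ∧
          (∀ a : 𝒜, ‖f a - D' a‖ ≤ 2 ^ p * θ / (2 - 2 ^ p) * ‖a‖ ^ p)) → D' = D) := by
  haveI : CompleteSpace 𝒜 := hclosed.completeSpace_coe
  set s : ℝ := (2:ℝ)^p with hs
  have hs0 : 0 < s := Real.rpow_pos_of_pos two_pos p
  have hs2 : s < 2 := by
    calc (2:ℝ)^p < 2^(1:ℝ) := Real.rpow_lt_rpow_of_exponent_lt one_lt_two hp1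
    _ = 2 := Real.rpow_one 2
  have h2s : 0 < 2 - s := by linarith
  have hr1 : s / 2 < 1 := by linarith
  have hr0 : (0:ℝ) ≤ s / 2 := by positivity
  have hpow := fun (n : ℕ) (a : 𝒜) => norm_two_pow_smul_rpow 𝒜 n a p
  have hzero : ‖(0:𝒜)‖ ^ p = 0 := by
    rw [show ‖(0:𝒜)‖ = 0 from norm_zero, Real.zero_rpow hp0.ne']
  have hcube0 : cube 𝒜 hA 0 = 0 := by
    apply Subtype.ext
    simp [cube]
  -- f 0 = 0
  have hf0 : f 0 = 0 := by
    have h := hineq 1 (by norm_num) 0 0 0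
    have e : jensenDefect 𝒜 hA 2 f 1 0 0 0 = (3:ℂ) • (f 0 : H →L[ℂ] K) := by
      simp only [jensenDefect, hcube0, Complex.ofReal_ofNat, add_zero, sub_zero, smul_zero,
        one_smul, mul_one, ZeroMemClass.coe_zero, comp_zero, zero_comp, map_zero]
      module
    rw [e] at h
    simp only [hzero, add_zero, mul_zero] at h
    have h3 : ‖(3:ℂ) • (f 0 : H →L[ℂ] K)‖ = 3 * ‖f 0‖ := by
      rw [norm_smul (3:ℂ) ((f 0 : H →L[ℂ] K))]; norm_num
    rw [h3] at h
    have : ‖f 0‖ ≤ 0 := by linarith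
    exact norm_le_zero_iff.mp this
  -- halving estimate
  have hhalf : ∀ x : 𝒜, ‖(2:ℂ) • f x - f ((2:ℂ) • x)‖ ≤ θ * s / 2 * ‖x‖ ^ p := by
    intro x
    have h := hineq 1 (by norm_num) ((2:ℂ)•x) 0 0
    have e2 : (2:ℂ)⁻¹ • ((2:ℂ)•x) = x := by match_scalars <;> norm_num
    have e : jensenDefect 𝒜 hA 2 f 1 ((2:ℂ)•x) 0 0
        = (2:ℂ) • ((2:ℂ) • (f x : H →L[ℂ] K) - (f ((2:ℂ)•x) : H →L[ℂ] K)) := by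
      simp only [jensenDefect, hcube0, Complex.ofReal_ofNat, add_zero, sub_zero, e2, hf0,
        one_smul, mul_one, ZeroMemClass.coe_zero, comp_zero, zero_comp, map_zero]
      module
    rw [e] at h
    have hx : ‖(2:ℂ)•x‖^p = s*‖x‖^p := by simpa using hpow 1 x
    simp only [hzero, add_zero, hx] at h
    rw [norm_smul (2:ℂ) ((2:ℂ) • (f x : H →L[ℂ] K) - (f ((2:ℂ)•x) : H →L[ℂ] K))] at h
    have h2n : ‖(2:ℂ)‖ = 2 := by simp
    rw [h2n] at h
    have hco : ‖(2:ℂ) • (f x : H →L[ℂ] K) - (f ((2:ℂ)•x) : H →L[ℂ] K)‖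
        = ‖(2:ℂ) • f x - f ((2:ℂ) • x)‖ := rfl
    rw [hco] at h
    linarith
  -- successive distances
  have hdist : ∀ (a : 𝒜) (n : ℕ),
      dist (hyersSeq 𝒜 f n a) (hyersSeq 𝒜 f (n+1) a) ≤ (θ * s / 4 * ‖a‖ ^ p) * (s/2) ^ n := by
    intro a n
    rw [dist_eq_norm]
    have key : hyersSeq 𝒜 f n a - hyersSeq 𝒜 f (n+1) a
        = ((2:ℂ)^(n+1))⁻¹ • ((2:ℂ) • f ((2:ℂ)^n • a) - f ((2:ℂ) • ((2:ℂ)^n • a))) := by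
      simp only [hyersSeq]
      have e5 : ((2:ℂ))•((2:ℂ)^n • a) = (2:ℂ)^(n+1) • a := by
        rw [smul_smul]
        congr 1
        ring
      rw [e5]
      match_scalars <;> (field_simp; try ring)
    rw [key]
    refine (show ‖((2:ℂ)^(n+1))⁻¹ • ((2:ℂ) • f ((2:ℂ)^n • a) - f ((2:ℂ) • ((2:ℂ)^n • a)))‖
        = ‖((2:ℂ)^(n+1))⁻¹‖ * ‖(2:ℂ) • f ((2:ℂ)^n • a) - f ((2:ℂ) • ((2:ℂ)^n • a))‖ from
      norm_smul (β := H →L[ℂ] K) (((2:ℂ)^(n+1))⁻¹) (((2:ℂ) • f ((2:ℂ)^n • a) - f ((2:ℂ) • ((2:ℂ)^n • a)) : 𝒜) : H →L[ℂ] K)).trans_le ?_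
    have h1 : ‖((2:ℂ)^(n+1))⁻¹‖ = ((2:ℝ)^(n+1))⁻¹ := by simp
    rw [h1]
    have h2 := hhalf ((2:ℂ)^n • a)
    rw [hpow n a] at h2
    calc ((2:ℝ)^(n+1))⁻¹ * ‖(2:ℂ) • f ((2:ℂ)^n • a) - f ((2:ℂ) • ((2:ℂ)^n • a))‖
        ≤ ((2:ℝ)^(n+1))⁻¹ * (θ * s / 2 * (s^n * ‖a‖^p)) := by
          apply mul_le_mul_of_nonneg_left h2 (by positivity)
      _ = (θ * s / 4 * ‖a‖ ^ p) * (s/2) ^ n := by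
          rw [div_pow, pow_succ]
          ring
  have hcauchy : ∀ a : 𝒜, CauchySeq (fun n => hyersSeq 𝒜 f n a) :=
    fun a => cauchySeq_of_le_geometric (s/2) _ hr1 (hdist a)
  choose D hD using fun a : 𝒜 => cauchySeq_tendsto_of_complete (hcauchy a)
  -- approximation bound
  have hbound : ∀ a : 𝒜, ‖f a - D a‖ ≤ s * θ / (2 - s) * ‖a‖ ^ p := by
    intro a
    have ht := dist_le_of_le_geometric_of_tendsto₀ (s/2) (θ*s/4*‖a‖^p) hr1 (hdist a) (hD a)
    have h0 : hyersSeq 𝒜 f 0 a = f a := by simp [hyersSeq]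
    rw [h0, dist_eq_norm] at ht
    refine ht.trans ?_
    have hne2 : (1 - s/2) ≠ 0 := by
      have : 0 < 1 - s/2 := by linarith
      linarith
    have heq : θ*s/4*‖a‖^p/(1-s/2) = s*θ/(2*(2-s))*‖a‖^p := by
      field_simp
      ring
    rw [heq]
    have hle : s*θ/(2*(2-s)) ≤ s*θ/(2-s) := by
      apply div_le_div_of_nonneg_left (by positivity) h2s
      linarith
    exact mul_le_mul_of_nonneg_right hle (by positivity)
  -- additivity
  have hadd : ∀ u v : 𝒜, D (u + v) = D u + D v := by
    intro u v
    have hTd : Tendsto (fun n => hyersSeq 𝒜 f n u + hyersSeq 𝒜 f n v - hyersSeq 𝒜 f n (u+v))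
        atTop (𝓝 (D u + D v - D (u+v))) := ((hD u).add (hD v)).sub (hD (u+v))
    have hT0 : Tendsto (fun n => hyersSeq 𝒜 f n u + hyersSeq 𝒜 f n v - hyersSeq 𝒜 f n (u+v))
        atTop (𝓝 0) := by
      apply squeeze_zero_norm (a := fun n => (θ/2 * (‖u+v‖^p + ‖u-v‖^p)) * (s/2)^n)
      · intro n
        have h := hineq 1 (by norm_num) ((2:ℂ)^n • (u+v)) ((2:ℂ)^n • (u-v)) 0
        have e1 : (2:ℂ)⁻¹ • ((2:ℂ)^n • (u+v) + (2:ℂ)^n • (u-v)) = (2:ℂ)^n • u := by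
          match_scalars <;> (field_simp; try ring)
        have e2 : (2:ℂ)⁻¹ • ((2:ℂ)^n • (u+v) - (2:ℂ)^n • (u-v)) = (2:ℂ)^n • v := by
          match_scalars <;> (field_simp; try ring)
        have e : jensenDefect 𝒜 hA 2 f 1 ((2:ℂ)^n • (u+v)) ((2:ℂ)^n • (u-v)) 0
            = ((2:ℂ)^(n+1)) • ((hyersSeq 𝒜 f n u + hyersSeq 𝒜 f n v
                - hyersSeq 𝒜 f n (u+v) : 𝒜) : H →L[ℂ] K) := by
          simp only [jensenDefect, hcube0, Complex.ofReal_ofNat, e1, e2, hf0, one_smul, mul_one,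
            ZeroMemClass.coe_zero, comp_zero, zero_comp, map_zero, sub_zero, hyersSeq,
            Submodule.coe_add, SetLike.val_smul, AddSubgroupClass.coe_sub]
          match_scalars <;> (field_simp; try ring)
        rw [e] at h
        rw [norm_smul ((2:ℂ)^(n+1)) ((hyersSeq 𝒜 f n u + hyersSeq 𝒜 f n v
                - hyersSeq 𝒜 f n (u+v) : 𝒜) : H →L[ℂ] K)] at h
        have hc2 : ‖(2:ℂ)^(n+1)‖ = 2^(n+1) := by simp
        rw [hc2, hpow n (u+v), hpow n (u-v), hzero, add_zero] at h
        have hcoe : ‖((hyersSeq 𝒜 f n u + hyersSeq 𝒜 f n v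
                - hyersSeq 𝒜 f n (u+v) : 𝒜) : H →L[ℂ] K)‖
            = ‖hyersSeq 𝒜 f n u + hyersSeq 𝒜 f n v - hyersSeq 𝒜 f n (u+v)‖ := rfl
        rw [hcoe] at h
        have h2p : (0:ℝ) < 2^(n+1) := by positivity
        rw [show (θ/2 * (‖u+v‖^p + ‖u-v‖^p)) * (s/2)^n
            = (θ * ((s:ℝ)^n * ‖u+v‖^p + s^n * ‖u-v‖^p))/2^(n+1) by
          rw [div_pow, pow_succ]; ring]
        rw [← hs] at h
        rw [le_div_iff₀ h2p]
        exact (mul_comm _ _).trans_le h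
      · simpa using (tendsto_pow_atTop_nhds_zero_of_lt_one hr0 hr1).const_mul _
    have h0 := tendsto_nhds_unique hTd hT0
    exact (sub_eq_zero.mp h0).symm
  -- unit homogeneity
  have hunit : ∀ (μ : ℂ), ‖μ‖ = 1 → ∀ a : 𝒜, D (μ • a) = μ • D a := by
    intro μ hμ a
    have hTd : Tendsto (fun n => μ • hyersSeq 𝒜 f n a - hyersSeq 𝒜 f n (μ • a))
        atTop (𝓝 (μ • D a - D (μ • a))) := ((hD a).const_smul μ).sub (hD (μ • a))
    have hT0 : Tendsto (fun n => μ • hyersSeq 𝒜 f n a - hyersSeq 𝒜 f n (μ • a))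
        atTop (𝓝 0) := by
      apply squeeze_zero_norm (a := fun n => (θ * (2 * ‖a‖^p)) / 2 * (s/2)^n)
      · intro n
        have h := hineq μ hμ ((2:ℂ)^n • a) ((2:ℂ)^n • a) 0
        have e1 : (2:ℂ)⁻¹ • ((2:ℂ)^n • a + (2:ℂ)^n • a) = (2:ℂ)^n • a := by
          match_scalars <;> (field_simp; try ring)
        have e2 : ((2:ℂ)^n • a - (2:ℂ)^n • a) = (0:𝒜) := sub_self _
        have e3 : μ • ((2:ℂ)^n • a) = (2:ℂ)^n • (μ • a) := smul_comm μ _ a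
        have e : jensenDefect 𝒜 hA 2 f μ ((2:ℂ)^n • a) ((2:ℂ)^n • a) 0
            = ((2:ℂ)^(n+1)) • ((μ • hyersSeq 𝒜 f n a - hyersSeq 𝒜 f n (μ • a) : 𝒜) : H →L[ℂ] K) := by
          simp only [jensenDefect, hcube0, Complex.ofReal_ofNat, e1, e2, e3, hf0, one_smul, mul_one,
            ZeroMemClass.coe_zero, comp_zero, zero_comp, map_zero, sub_zero, smul_zero, add_zero,
            hyersSeq, SetLike.val_smul, AddSubgroupClass.coe_sub]
          match_scalars <;> (field_simp; try ring)
        rw [e] at h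
        rw [norm_smul ((2:ℂ)^(n+1)) ((μ • hyersSeq 𝒜 f n a
            - hyersSeq 𝒜 f n (μ • a) : 𝒜) : H →L[ℂ] K)] at h
        have hc2 : ‖(2:ℂ)^(n+1)‖ = 2^(n+1) := by simp
        rw [hc2, hpow n a, hzero, add_zero] at h
        have hcoe : ‖((μ • hyersSeq 𝒜 f n a - hyersSeq 𝒜 f n (μ • a) : 𝒜) : H →L[ℂ] K)‖
            = ‖μ • hyersSeq 𝒜 f n a - hyersSeq 𝒜 f n (μ • a)‖ := rfl
        rw [hcoe] at h
        have h2p : (0:ℝ) < 2^(n+1) := by positivity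
        rw [show (θ * (2 * ‖a‖^p)) / 2 * (s/2)^n
            = (θ * ((s:ℝ)^n * ‖a‖^p + (s:ℝ)^n * ‖a‖^p))/2^(n+1) by
          rw [div_pow, pow_succ]; ring]
        rw [← hs] at h
        rw [le_div_iff₀ h2p]
        exact (mul_comm _ _).trans_le h
      · simpa using (tendsto_pow_atTop_nhds_zero_of_lt_one hr0 hr1).const_mul _
    have h0 := tendsto_nhds_unique hTd hT0
    exact (sub_eq_zero.mp h0).symm
  -- full homogeneity
  have hD0 : D 0 = 0 := by
    have h := hadd 0 0
    rw [add_zero] at h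
    exact (left_eq_add.mp h)
  have hnat : ∀ (n : ℕ) (a : 𝒜), D ((n:ℂ) • a) = (n:ℂ) • D a := by
    intro n
    induction n with
    | zero => intro a; simp [hD0]
    | succ k ih =>
      intro a
      have e : ((k+1:ℕ):ℂ) • a = (k:ℂ) • a + a := by
        push_cast
        rw [add_smul, one_smul]
      rw [e, hadd, ih]
      push_cast
      rw [add_smul, one_smul]
  have hhalfD : ∀ a : 𝒜, D ((2:ℂ)⁻¹ • a) = (2:ℂ)⁻¹ • D a := by
    intro a
    have h2 : (2:ℂ)⁻¹ • a + (2:ℂ)⁻¹ • a = a := by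
      match_scalars <;> (field_simp; try ring)
    have h := hadd ((2:ℂ)⁻¹ • a) ((2:ℂ)⁻¹ • a)
    rw [h2] at h
    rw [h]
    match_scalars <;> (field_simp; try ring)
  have hreal1 : ∀ (t : ℝ), |t| ≤ 1 → ∀ a : 𝒜, D ((t:ℂ) • a) = (t:ℂ) • D a := by
    intro t ht a
    set w : ℝ := Real.sqrt (1 - t^2) with hwdef
    have hw2 : w^2 = 1 - t^2 := Real.sq_sqrt (by nlinarith [abs_le.mp ht])
    set μ : ℂ := (t:ℂ) + (w:ℂ)*Complex.I with hμdef
    set ν : ℂ := (t:ℂ) - (w:ℂ)*Complex.I with hνdef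
    have hnμ : ‖μ‖ = 1 := by
      rw [hμdef, Complex.norm_def, Complex.normSq_add_mul_I, hw2]
      norm_num
    have hνconj : ν = starRingEnd ℂ μ := by
      rw [hμdef, hνdef]
      simp [map_add, map_mul, Complex.conj_ofReal, Complex.conj_I]
      ring
    have hnν : ‖ν‖ = 1 := by
      rw [hνconj, RCLike.norm_conj, hnμ]
    have hsum : μ + ν = 2*(t:ℂ) := by rw [hμdef, hνdef]; ring
    have key : (t:ℂ) • a = (2:ℂ)⁻¹ • (μ • a + ν • a) := by
      rw [← add_smul, hsum]
      match_scalars <;> (field_simp; try ring)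
    rw [key, hhalfD, hadd, hunit μ hnμ, hunit ν hnν, ← add_smul, hsum, smul_smul]
    congr 1
    field_simp
  have hrealAll : ∀ (t : ℝ) (a : 𝒜), D ((t:ℂ) • a) = (t:ℂ) • D a := by
    intro t a
    obtain ⟨n, hn⟩ := exists_nat_ge |t|
    have hm : (0:ℝ) < (n:ℝ) + 1 := by positivity
    have hdiv : |t/((n:ℝ)+1)| ≤ 1 := by
      rw [abs_div, abs_of_pos hm, div_le_one hm]
      have : (n:ℝ) ≤ (n:ℝ) + 1 := by linarith
      linarith
    have hne : ((n:ℂ)+1) ≠ 0 := Nat.cast_add_one_ne_zero n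
    have split : (t:ℂ) • a = ((n+1:ℕ):ℂ) • (((t/((n:ℝ)+1):ℝ):ℂ) • a) := by
      rw [smul_smul]
      congr 1
      push_cast
      field_simp
    rw [split, hnat, hreal1 _ hdiv, smul_smul]
    congr 1
    push_cast
    field_simp
  have hsmul : ∀ (z : ℂ) (a : 𝒜), D (z • a) = z • D a := by
    intro z a
    rcases eq_or_ne z 0 with rfl | hz
    · simp [hD0]
    · have hnz : ‖z‖ ≠ 0 := norm_ne_zero_iff.2 hz
      have hnzC : ((‖z‖:ℝ):ℂ) ≠ 0 := by
        exact_mod_cast hnz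
      have hu : ‖z/((‖z‖:ℝ):ℂ)‖ = 1 := by
        rw [norm_div, Complex.norm_real, norm_norm, div_self hnz]
      have split : z • a = ((‖z‖:ℝ):ℂ) • ((z/((‖z‖:ℝ):ℂ)) • a) := by
        rw [smul_smul]
        congr 1
        field_simp [hnzC]
      rw [split, hrealAll, hunit _ hu, smul_smul]
      congr 1
      field_simp [hnzC]
  -- derivation property
  have hder : ∀ c : 𝒜, (D (cube 𝒜 hA c) : H →L[ℂ] K) =
      ((D c : H →L[ℂ] K) ∘L adjoint (c : H →L[ℂ] K)) ∘L (c : H →L[ℂ] K) +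
      ((c : H →L[ℂ] K) ∘L adjoint (D c : H →L[ℂ] K)) ∘L (c : H →L[ℂ] K) +
      ((c : H →L[ℂ] K) ∘L adjoint (c : H →L[ℂ] K)) ∘L (D c : H →L[ℂ] K) := by
    intro c
    have hadj : ∀ (z : ℂ) (x : H →L[ℂ] K), adjoint (z • x) = star z • adjoint x :=
      fun z x => LinearIsometryEquiv.map_smulₛₗ adjoint z x
    have hstar : ∀ n : ℕ, star ((2:ℂ)^n) = (2:ℂ)^n := by intro n; simp
    have hcube_smul : ∀ n : ℕ, cube 𝒜 hA ((2:ℂ)^n • c) = ((2:ℂ)^(3*n)) • cube 𝒜 hA c := by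
      intro n
      apply Subtype.ext
      simp only [cube, SetLike.val_smul]
      rw [hadj, hstar]
      simp only [smul_comp, comp_smul, smul_smul]
      congr 1
      ring
    have hXbound : ∀ n : ℕ, ‖(hyersSeq 𝒜 f (3*n) (cube 𝒜 hA c) : H →L[ℂ] K)
        - ((hyersSeq 𝒜 f n c : H →L[ℂ] K) ∘L adjoint (c : H →L[ℂ] K)) ∘L (c : H →L[ℂ] K)
        - ((c : H →L[ℂ] K) ∘L adjoint ((hyersSeq 𝒜 f n c : H →L[ℂ] K))) ∘L (c : H →L[ℂ] K)
        - ((c : H →L[ℂ] K) ∘L adjoint (c : H →L[ℂ] K)) ∘L (hyersSeq 𝒜 f n c : H →L[ℂ] K)‖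
        ≤ (θ * ‖c‖^p) * (s/8)^n := by
      intro n
      have h := hineq 1 (by norm_num) 0 0 ((2:ℂ)^n • c)
      have e : jensenDefect 𝒜 hA 2 f 1 0 0 ((2:ℂ)^n • c)
          = ((2:ℂ)^(3*n)) • ((hyersSeq 𝒜 f (3*n) (cube 𝒜 hA c) : H →L[ℂ] K)
        - ((hyersSeq 𝒜 f n c : H →L[ℂ] K) ∘L adjoint (c : H →L[ℂ] K)) ∘L (c : H →L[ℂ] K)
        - ((c : H →L[ℂ] K) ∘L adjoint ((hyersSeq 𝒜 f n c : H →L[ℂ] K))) ∘L (c : H →L[ℂ] K)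
        - ((c : H →L[ℂ] K) ∘L adjoint (c : H →L[ℂ] K)) ∘L (hyersSeq 𝒜 f n c : H →L[ℂ] K)) := by
        simp only [jensenDefect, hcube_smul, hf0, Complex.ofReal_ofNat, add_zero, sub_zero,
          smul_zero, one_smul, mul_one, ZeroMemClass.coe_zero, map_zero, hyersSeq,
          SetLike.val_smul, hadj, star_inv₀, hstar, smul_comp, comp_smul, smul_smul, smul_sub]
        match_scalars <;> (field_simp; try ring)
      rw [e] at h
      rw [norm_smul ((2:ℂ)^(3*n)) ((hyersSeq 𝒜 f (3*n) (cube 𝒜 hA c) : H →L[ℂ] K)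
        - ((hyersSeq 𝒜 f n c : H →L[ℂ] K) ∘L adjoint (c : H →L[ℂ] K)) ∘L (c : H →L[ℂ] K)
        - ((c : H →L[ℂ] K) ∘L adjoint ((hyersSeq 𝒜 f n c : H →L[ℂ] K))) ∘L (c : H →L[ℂ] K)
        - ((c : H →L[ℂ] K) ∘L adjoint (c : H →L[ℂ] K)) ∘L (hyersSeq 𝒜 f n c : H →L[ℂ] K))] at h
      have hc2 : ‖(2:ℂ)^(3*n)‖ = (2:ℝ)^(3*n) := by simp
      rw [hc2, hzero, hpow n c] at h
      have h2p : (0:ℝ) < (2:ℝ)^(3*n) := by positivity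
      rw [show (θ * ‖c‖^p) * (s/8)^n = (θ * (0 + 0 + (s:ℝ)^n * ‖c‖^p))/(2:ℝ)^(3*n) by
        rw [div_pow, pow_mul]
        norm_num
        ring]
      rw [le_div_iff₀ h2p]
      nlinarith [h, h2p]
    have h3n : Tendsto (fun n : ℕ => 3*n) atTop atTop := by
      apply tendsto_atTop_atTop.mpr
      intro b
      exact ⟨b, fun n hn => le_trans hn (Nat.le_mul_of_pos_left n (by norm_num))⟩
    have tcoe : Tendsto (fun n => (hyersSeq 𝒜 f n c : H →L[ℂ] K)) atTop
        (𝓝 (D c : H →L[ℂ] K)) := (continuous_subtype_val.tendsto _).comp (hD c)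
    have t1 : Tendsto (fun n => (hyersSeq 𝒜 f (3*n) (cube 𝒜 hA c) : H →L[ℂ] K)) atTop
        (𝓝 (D (cube 𝒜 hA c) : H →L[ℂ] K)) :=
      (((continuous_subtype_val.tendsto _).comp (hD (cube 𝒜 hA c)))).comp h3n
    have t2 : Tendsto (fun n => ((hyersSeq 𝒜 f n c : H →L[ℂ] K)
          ∘L adjoint (c : H →L[ℂ] K)) ∘L (c : H →L[ℂ] K)) atTop
        (𝓝 (((D c : H →L[ℂ] K) ∘L adjoint (c : H →L[ℂ] K)) ∘L (c : H →L[ℂ] K))) := by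
      have hcont : Continuous fun x : H →L[ℂ] K => (x ∘L adjoint (c : H →L[ℂ] K)) ∘L (c : H →L[ℂ] K) :=
        (continuous_id.clm_comp continuous_const).clm_comp continuous_const
      exact (hcont.tendsto _).comp tcoe
    have t3 : Tendsto (fun n => ((c : H →L[ℂ] K)
          ∘L adjoint (hyersSeq 𝒜 f n c : H →L[ℂ] K)) ∘L (c : H →L[ℂ] K)) atTop
        (𝓝 (((c : H →L[ℂ] K) ∘L adjoint (D c : H →L[ℂ] K)) ∘L (c : H →L[ℂ] K))) := by
      have hadjc : Continuous fun x : H →L[ℂ] K => adjoint x :=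
        (ContinuousLinearMap.adjoint (𝕜 := ℂ) (E := H) (F := K)).continuous
      have hcont : Continuous fun x : H →L[ℂ] K =>
          ((c : H →L[ℂ] K) ∘L adjoint x) ∘L (c : H →L[ℂ] K) :=
        (continuous_const.clm_comp hadjc).clm_comp continuous_const
      exact (hcont.tendsto _).comp tcoe
    have t4 : Tendsto (fun n => ((c : H →L[ℂ] K)
          ∘L adjoint (c : H →L[ℂ] K)) ∘L (hyersSeq 𝒜 f n c : H →L[ℂ] K)) atTop
        (𝓝 (((c : H →L[ℂ] K) ∘L adjoint (c : H →L[ℂ] K)) ∘L (D c : H →L[ℂ] K))) := by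
      have hcont : Continuous fun x : H →L[ℂ] K =>
          ((c : H →L[ℂ] K) ∘L adjoint (c : H →L[ℂ] K)) ∘L x :=
        continuous_const.clm_comp continuous_id
      exact (hcont.tendsto _).comp tcoe
    have ttotal := ((t1.sub t2).sub t3).sub t4
    have hT0 : Tendsto (fun n => (hyersSeq 𝒜 f (3*n) (cube 𝒜 hA c) : H →L[ℂ] K)
        - ((hyersSeq 𝒜 f n c : H →L[ℂ] K) ∘L adjoint (c : H →L[ℂ] K)) ∘L (c : H →L[ℂ] K)
        - ((c : H →L[ℂ] K) ∘L adjoint ((hyersSeq 𝒜 f n c : H →L[ℂ] K))) ∘L (c : H →L[ℂ] K)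
        - ((c : H →L[ℂ] K) ∘L adjoint (c : H →L[ℂ] K)) ∘L (hyersSeq 𝒜 f n c : H →L[ℂ] K))
        atTop (𝓝 0) := by
      apply squeeze_zero_norm hXbound
      have hr81 : s / 8 < 1 := by linarith
      have hr80 : (0:ℝ) ≤ s / 8 := by positivity
      simpa using (tendsto_pow_atTop_nhds_zero_of_lt_one hr80 hr81).const_mul (θ * ‖c‖^p)
    have heq := tendsto_nhds_unique ttotal hT0
    rw [sub_sub, sub_sub, sub_eq_zero] at heq
    rw [heq]
    abel
  refine ⟨D, ⟨⟨hadd, hsmul, hder⟩, hbound, fun a => by simpa [hyersSeq] using hD a⟩, ?_⟩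
  -- uniqueness
  rintro D' ⟨⟨hadd', hsmul', hder'⟩, hbound'⟩
  funext a
  have key : ∀ n : ℕ, ‖D' a - D a‖ ≤ (2*(s*θ/(2-s))*‖a‖^p) * (s/2)^n := by
    intro n
    have h1 := hbound ((2:ℂ)^n • a)
    have h2 := hbound' ((2:ℂ)^n • a)
    rw [hpow n a] at h1 h2
    have hDs : D ((2:ℂ)^n • a) = (2:ℂ)^n • D a := hsmul _ _
    have hDs' : D' ((2:ℂ)^n • a) = (2:ℂ)^n • D' a := hsmul' _ _
    have hd : D' a - D a = ((2:ℂ)^n)⁻¹ • ((f ((2:ℂ)^n • a) - D ((2:ℂ)^n • a))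
        - (f ((2:ℂ)^n • a) - D' ((2:ℂ)^n • a))) := by
      rw [hDs, hDs']
      match_scalars <;> (field_simp; try ring)
    rw [hd, show ‖((2:ℂ)^n)⁻¹ • ((f ((2:ℂ)^n • a) - D ((2:ℂ)^n • a))
        - (f ((2:ℂ)^n • a) - D' ((2:ℂ)^n • a)))‖ = ‖((2:ℂ)^n)⁻¹‖ * ‖(f ((2:ℂ)^n • a) - D ((2:ℂ)^n • a))
        - (f ((2:ℂ)^n • a) - D' ((2:ℂ)^n • a))‖ from norm_smul (β := H →L[ℂ] K) (((2:ℂ)^n)⁻¹)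
        (((f ((2:ℂ)^n • a) - D ((2:ℂ)^n • a)) - (f ((2:ℂ)^n • a) - D' ((2:ℂ)^n • a)) : 𝒜) : H →L[ℂ] K)]
    have hin : ‖((2:ℂ)^n)⁻¹‖ = ((2:ℝ)^n)⁻¹ := by simp
    rw [hin]
    have htri := norm_sub_le (f ((2:ℂ)^n • a) - D ((2:ℂ)^n • a))
      (f ((2:ℂ)^n • a) - D' ((2:ℂ)^n • a))
    have hpn : ((2:ℝ)^n) ≠ 0 := by positivity
    calc ((2:ℝ)^n)⁻¹ * ‖(f ((2:ℂ)^n • a) - D ((2:ℂ)^n • a))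
          - (f ((2:ℂ)^n • a) - D' ((2:ℂ)^n • a))‖
        ≤ ((2:ℝ)^n)⁻¹ * (s*θ/(2-s)*((s:ℝ)^n*‖a‖^p) + s*θ/(2-s)*((s:ℝ)^n*‖a‖^p)) := by
          apply mul_le_mul_of_nonneg_left _ (by positivity)
          exact htri.trans (add_le_add h1 h2)
      _ = (2*(s*θ/(2-s))*‖a‖^p) * (s/2)^n := by
          rw [div_pow]
          field_simp
          ring
  have h0 : Tendsto (fun n : ℕ => (2*(s*θ/(2-s))*‖a‖^p) * (s/2)^n) atTop (𝓝 0) := by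
    simpa using (tendsto_pow_atTop_nhds_zero_of_lt_one hr0 hr1).const_mul (2*(s*θ/(2-s))*‖a‖^p)
  have hle : ‖D' a - D a‖ ≤ 0 := ge_of_tendsto' h0 key
  exact sub_eq_zero.mp (norm_le_zero_iff.mp hle)
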